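/- For the connection on the plane with nonzero Christoffel symbols Γ¹₁₁ = Γ²₁₂ = Γ²₂₁ = -2x₁/(1+x₁²) and Γ²₁₁ = 2x₂/(1+x₁²), every curve of the form x₂ = A(x₁² - 1) + B x₁ (parametrized by x₁ = tan(ωt + φ₀), x₂ accordingly) is a geodesic; specifically, the curves t ↦ (tan(ωt+φ₀), (c₁e^{2iωt}+c₂e^{-2iωt})sec²(ωt+φ₀)) satisfy the geodesic equations ẍᵏ + Γᵏᵢⱼ ẋⁱ ẋʲ = 0. -/

import Mathlib

open Real Filter

lemma hder_tan (ω φ₀ : ℝ) {s : ℝ} (h : Real.cos (ω * s + φ₀) ≠ 0) :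
    HasDerivAt (fun s => Real.tan (ω * s + φ₀))
      (ω * (1 + Real.tan (ω * s + φ₀) ^ 2)) s := by
  have h1 : HasDerivAt (fun s : ℝ => ω * s + φ₀) ω s := by
    simpa using ((hasDerivAt_id s).const_mul ω).add_const φ₀
  have h2 := (Real.hasDerivAt_tan h).comp s h1
  refine h2.congr_deriv ?_
  rw [Real.tan_eq_sin_div_cos, div_pow, one_add_div (pow_ne_zero 2 h), cos_sq_add_sin_sq]
  ring

/-- For the connection with nonzero Christoffel symbols
`Γ¹₁₁ = Γ²₁₂ = Γ²₂₁ = -2x₁/(1+x₁²)` and `Γ²₁₁ = 2x₂/(1+x₁²)`, the curves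
`x₁(t) = tan(ωt+φ₀)`, `x₂(t) = A(x₁(t)² - 1) + B x₁(t)` (the parabolas
`x₂ = A(x₁² - 1) + Bx₁`) satisfy the geodesic equations
`ẍᵏ + Γᵏᵢⱼ ẋⁱ ẋʲ = 0`. -/
theorem stmt_19 : ∀ A B ω φ₀ t : ℝ, Real.cos (ω * t + φ₀) ≠ 0 →
    (fun x₁ x₂ : ℝ → ℝ =>
      deriv (deriv x₁) t
        + (-2 * x₁ t / (1 + x₁ t ^ 2)) * (deriv x₁ t) ^ 2 = 0 ∧
      deriv (deriv x₂) t
        + (2 * x₂ t / (1 + x₁ t ^ 2)) * (deriv x₁ t) ^ 2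
        + 2 * (-2 * x₁ t / (1 + x₁ t ^ 2)) * (deriv x₁ t) * (deriv x₂ t) = 0)
    (fun s => Real.tan (ω * s + φ₀))
    (fun s => A * (Real.tan (ω * s + φ₀) ^ 2 - 1) + B * Real.tan (ω * s + φ₀)) := by
  intro A B ω φ₀ t ht
  simp only
  set f : ℝ → ℝ := fun s => Real.tan (ω * s + φ₀) with hf
  have hnb : ∀ᶠ s in nhds t, Real.cos (ω * s + φ₀) ≠ 0 := by
    have hc : Continuous fun s => Real.cos (ω * s + φ₀) := by continuity
    exact hc.continuousAt.eventually_ne ht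
  set c : ℝ := f t with hc
  have hpos : (1 : ℝ) + c ^ 2 ≠ 0 := by positivity
  -- first derivative of f
  have hd1 : deriv f =ᶠ[nhds t] fun s => ω * (1 + f s ^ 2) :=
    hnb.mono fun s hs => (hder_tan ω φ₀ hs).deriv
  have hft : deriv f t = ω * (1 + c ^ 2) := (hder_tan ω φ₀ ht).deriv
  -- second derivative of f
  have hg : HasDerivAt (fun s => ω * (1 + f s ^ 2))
      (ω * (2 * c * (ω * (1 + c ^ 2)))) t := by
    have := ((hder_tan ω φ₀ ht).pow 2).const_add 1
    simpa [mul_comm, mul_assoc, mul_left_comm] using this.const_mul ω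
  have hf2 : deriv (deriv f) t = ω * (2 * c * (ω * (1 + c ^ 2))) := by
    rw [hd1.deriv_eq]; exact hg.deriv
  -- x₂
  set g : ℝ → ℝ := fun s => A * (f s ^ 2 - 1) + B * f s with hgdef
  have hx2d : ∀ s, Real.cos (ω * s + φ₀) ≠ 0 →
      HasDerivAt g ((2 * A * f s + B) * (ω * (1 + f s ^ 2))) s := by
    intro s hs
    have h1 := (((hder_tan ω φ₀ hs).pow 2).sub_const 1).const_mul A
    have h2 := (hder_tan ω φ₀ hs).const_mul B
    have := h1.add h2
    refine this.congr_deriv ?_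
    simp only [hf]
    ring
  have hgd1 : deriv g =ᶠ[nhds t] fun s => (2 * A * f s + B) * (ω * (1 + f s ^ 2)) :=
    hnb.mono fun s hs => (hx2d s hs).deriv
  have hgt : deriv g t = (2 * A * c + B) * (ω * (1 + c ^ 2)) := (hx2d t ht).deriv
  have hgg : HasDerivAt (fun s => (2 * A * f s + B) * (ω * (1 + f s ^ 2)))
      ((2 * A * (ω * (1 + c ^ 2))) * (ω * (1 + c ^ 2))
        + (2 * A * c + B) * (ω * (2 * c * (ω * (1 + c ^ 2))))) t := by
    have h1 : HasDerivAt (fun s => 2 * A * f s + B) (2 * A * (ω * (1 + c ^ 2))) t := by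
      simpa [mul_assoc] using ((hder_tan ω φ₀ ht).const_mul (2 * A)).add_const B
    exact h1.mul hg
  have hg2 : deriv (deriv g) t =
      (2 * A * (ω * (1 + c ^ 2))) * (ω * (1 + c ^ 2))
        + (2 * A * c + B) * (ω * (2 * c * (ω * (1 + c ^ 2)))) := by
    rw [hgd1.deriv_eq]; exact hgg.deriv
  constructor
  · rw [hf2, hft]
    field_simp
    ring
  · show deriv (deriv g) t + (2 * g t / (1 + f t ^ 2)) * (deriv f t) ^ 2
      + 2 * (-2 * f t / (1 + f t ^ 2)) * deriv f t * deriv g t = 0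
    rw [hg2, hft, hgt]
    show _ + (2 * (A * (c ^ 2 - 1) + B * c) / (1 + c ^ 2)) * _ + _ = 0
    field_simp
    ring
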